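/- In a finite MDP, the map from reward functions r : S × A → ℝ to their optimal soft-Q functions — defined as the unique solution of the soft Bellman equation Q(s,a) = r(s,a) + γ·∑_{s'} T(s'|s,a)·α·log ∑_{a'} exp(Q(s',a')/α) — is a bijection; explicitly the soft Bellman operator has a unique fixed point for each r, and distinct rewards yield distinct fixed points, with inverse r(s,a) = Q(s,a) − γ·∑_{s'} T(s'|s,a)·V_Q(s') where V_Q(s') = α·log ∑_{a'} exp(Q(s',a')/α). -/

import Mathlib

/-- `Q` is a fixed point of the soft Bellman operator for reward `r`. -/
def IsSoftBellmanFixedPoint {S A : Type*} [Fintype S] [Fintype A]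
    (T : S → A → S → ℝ) (γ α : ℝ) (r : S → A → ℝ) (Q : S → A → ℝ) : Prop :=
  ∀ s a, Q s a = r s a +
    γ * ∑ s', T s a s' * (α * Real.log (∑ a', Real.exp (Q s' a' / α)))

section aux

variable {S A : Type*} [Fintype S] [Fintype A] [Nonempty S] [Nonempty A]

/-- One-sided log-sum-exp Lipschitz estimate. -/
lemma lse_le {α : ℝ} (hα : 0 < α) (x y : A → ℝ) (c : ℝ)
    (h : ∀ a, x a ≤ y a + c) :
    α * Real.log (∑ a, Real.exp (x a / α)) ≤
      α * Real.log (∑ a, Real.exp (y a / α)) + c := by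
  have hpos : (0:ℝ) < ∑ a, Real.exp (y a / α) :=
    Finset.sum_pos (fun a _ => Real.exp_pos _) Finset.univ_nonempty
  have hsum : ∑ a, Real.exp (x a / α) ≤ Real.exp (c / α) * ∑ a, Real.exp (y a / α) := by
    rw [Finset.mul_sum]
    refine Finset.sum_le_sum fun a _ => ?_
    rw [← Real.exp_add]
    refine Real.exp_le_exp.2 ?_
    rw [← add_div]
    gcongr
    linarith [h a]
  have hlog : Real.log (∑ a, Real.exp (x a / α)) ≤
      Real.log (∑ a, Real.exp (y a / α)) + c / α := by
    calc Real.log (∑ a, Real.exp (x a / α)) ≤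
        Real.log (Real.exp (c / α) * ∑ a, Real.exp (y a / α)) :=
          Real.log_le_log (Finset.sum_pos (fun a _ => Real.exp_pos _) Finset.univ_nonempty) hsum
      _ = c / α + Real.log (∑ a, Real.exp (y a / α)) := by
          rw [Real.log_mul (Real.exp_ne_zero _) (ne_of_gt hpos), Real.log_exp]
      _ = _ := by ring
  have := mul_le_mul_of_nonneg_left hlog (le_of_lt hα)
  calc α * Real.log (∑ a, Real.exp (x a / α))
      ≤ α * (Real.log (∑ a, Real.exp (y a / α)) + c / α) := this
    _ = α * Real.log (∑ a, Real.exp (y a / α)) + c := by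
        rw [mul_add]
        congr 1
        field_simp

lemma lse_abs {α : ℝ} (hα : 0 < α) (x y : A → ℝ) (c : ℝ)
    (h : ∀ a, |x a - y a| ≤ c) :
    |α * Real.log (∑ a, Real.exp (x a / α)) -
      α * Real.log (∑ a, Real.exp (y a / α))| ≤ c := by
  rw [abs_sub_le_iff]
  constructor
  · have := lse_le hα x y c (fun a => by linarith [(abs_sub_le_iff.1 (h a)).1])
    linarith
  · have := lse_le hα y x c (fun a => by linarith [(abs_sub_le_iff.1 (h a)).2])
    linarith

end aux

/-- The map from rewards to optimal soft-Q functions is a bijection: the soft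
Bellman equation has a unique solution for each reward `r`, distinct rewards have
distinct fixed points, and the inverse map is
`r(s,a) = Q(s,a) − γ·∑_{s'} T(s'|s,a)·V_Q(s')`. -/
theorem soft_bellman_bijection {S A : Type*} [Fintype S] [Fintype A]
    [Nonempty S] [Nonempty A]
    (T : S → A → S → ℝ) (hT_nonneg : ∀ s a s', 0 ≤ T s a s')
    (hT_sum : ∀ s a, ∑ s', T s a s' = 1)
    (γ : ℝ) (hγ0 : 0 ≤ γ) (hγ1 : γ < 1) (α : ℝ) (hα : 0 < α) :
    (∀ r : S → A → ℝ, ∃! Q : S → A → ℝ, IsSoftBellmanFixedPoint T γ α r Q) ∧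
    (∀ r₁ r₂ Q, IsSoftBellmanFixedPoint T γ α r₁ Q →
      IsSoftBellmanFixedPoint T γ α r₂ Q → r₁ = r₂) ∧
    (∀ r Q, IsSoftBellmanFixedPoint T γ α r Q →
      ∀ s a, r s a = Q s a -
        γ * ∑ s', T s a s' * (α * Real.log (∑ a', Real.exp (Q s' a' / α)))) := by
  refine ⟨?_, ?_, ?_⟩
  · -- existence and uniqueness via Banach fixed point
    intro r
    set B : (S × A → ℝ) → (S × A → ℝ) := fun F p =>
      r p.1 p.2 + γ * ∑ s', T p.1 p.2 s' *
        (α * Real.log (∑ a', Real.exp (F (s', a') / α))) with hB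
    have hLip : LipschitzWith ⟨γ, hγ0⟩ B := by
      apply LipschitzWith.of_dist_le_mul
      intro F G
      rw [dist_pi_le_iff (by positivity)]
      intro p
      have hV : ∀ s', |α * Real.log (∑ a', Real.exp (F (s', a') / α)) -
          α * Real.log (∑ a', Real.exp (G (s', a') / α))| ≤ dist F G := by
        intro s'
        refine lse_abs hα _ _ _ (fun a' => ?_)
        have := dist_le_pi_dist F G (s', a')
        rwa [Real.dist_eq] at this
      have key : dist (B F p) (B G p) ≤ γ * dist F G := by
        simp only [hB, Real.dist_eq]
        have : r p.1 p.2 + γ * ∑ s', T p.1 p.2 s' *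
            (α * Real.log (∑ a', Real.exp (F (s', a') / α))) -
            (r p.1 p.2 + γ * ∑ s', T p.1 p.2 s' *
              (α * Real.log (∑ a', Real.exp (G (s', a') / α)))) =
            γ * ∑ s', T p.1 p.2 s' *
              ((α * Real.log (∑ a', Real.exp (F (s', a') / α))) -
               (α * Real.log (∑ a', Real.exp (G (s', a') / α)))) := by
          simp only [mul_sub, Finset.sum_sub_distrib]
          ring
        rw [this, abs_mul, abs_of_nonneg hγ0]
        refine mul_le_mul_of_nonneg_left ?_ hγ0
        calc |∑ s', T p.1 p.2 s' * _| ≤ ∑ s', |T p.1 p.2 s' *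
              ((α * Real.log (∑ a', Real.exp (F (s', a') / α))) -
               (α * Real.log (∑ a', Real.exp (G (s', a') / α))))| :=
            Finset.abs_sum_le_sum_abs _ _
          _ ≤ ∑ s', T p.1 p.2 s' * dist F G := by
            refine Finset.sum_le_sum fun s' _ => ?_
            rw [abs_mul, abs_of_nonneg (hT_nonneg _ _ _)]
            exact mul_le_mul_of_nonneg_left (hV s') (hT_nonneg _ _ _)
          _ = dist F G := by rw [← Finset.sum_mul, hT_sum, one_mul]
      exact key
    have hContr : ContractingWith ⟨γ, hγ0⟩ B := ⟨by exact_mod_cast hγ1, hLip⟩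
    have hfix : Function.IsFixedPt B (hContr.fixedPoint B) := hContr.fixedPoint_isFixedPt
    refine ⟨fun s a => hContr.fixedPoint B (s, a), ?_, ?_⟩
    · intro s a
      have := congrFun hfix (s, a)
      exact this.symm
    · intro Q hQ
      have : Function.IsFixedPt B (fun p => Q p.1 p.2) := by
        funext p
        exact (hQ p.1 p.2).symm
      have h2 := hContr.fixedPoint_unique this
      funext s a
      exact congrFun h2 (s, a)
  · intro r₁ r₂ Q h1 h2
    funext s a
    have e1 := h1 s a
    have e2 := h2 s a
    linarith
  · intro r Q hQ s a
    have := hQ s a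
    linarith
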